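/- Assume the Continuum Hypothesis. Then there exists a nonprincipal ultrafilter P on ℕ with ℙ ∈ P such that for every n ≥ 2, the set of ultrafilters F on ℕ satisfying A^{(n)} ∈ F for every A ∈ P with A ⊆ ℙ has cardinality 2^𝔠, where 𝔠 = 2^{ℵ₀}. -/

import Mathlib

/-- The set of primes, as a subset of the positive integers. -/
def primes : Set ℕ+ := {p | (p : ℕ).Prime}

/-- `A^{(n)} = {a_1⋯a_n : a_1,…,a_n ∈ A pairwise distinct}`. -/
def distinctProd (A : Set ℕ+) (n : ℕ) : Set ℕ+ :=
  {x | ∃ l : List ℕ+, l.length = n ∧ l.Nodup ∧ (∀ a ∈ l, a ∈ A) ∧ l.prod = x}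

open Filter Set

namespace S12
variable {α β : Type*}

theorem mem_ubind {f : Ultrafilter α} {m : α → Ultrafilter β} {s : Set β} :
    s ∈ f.bind m ↔ {a | s ∈ m a} ∈ f := by
  change s ∈ Filter.bind (↑f) (fun x => ↑(m x)) ↔ _
  rw [Filter.mem_bind']
  rfl

/-- `n`-fold tensor power of an ultrafilter, on lists of length `n`. -/
def tpow (U : Ultrafilter α) : ℕ → Ultrafilter (List α)
  | 0 => pure []
  | m + 1 => U.bind fun a => (tpow U m).map (a :: ·)

theorem mem_tpow_zero {U : Ultrafilter α} {s : Set (List α)} :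
    s ∈ tpow U 0 ↔ [] ∈ s := Iff.rfl

theorem mem_tpow_succ {U : Ultrafilter α} {m : ℕ} {s : Set (List α)} :
    s ∈ tpow U (m + 1) ↔ {a | {l | a :: l ∈ s} ∈ tpow U m} ∈ U := by
  rw [tpow, mem_ubind]
  simp [Ultrafilter.mem_map]
  rfl

/-- Key cube lemma. -/
theorem cube_mem_tpow {U : Ultrafilter α} (f : α → β)
    (hf : ∀ b : β, {a | f a ≠ b} ∈ U) {s : Set α} (hs : s ∈ U) (n : ℕ) :
    {l | l.length = n ∧ (∀ a ∈ l, a ∈ s) ∧ (l.map f).Nodup} ∈ tpow U n := by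
  induction n generalizing s with
  | zero => simp [mem_tpow_zero]
  | succ m ih =>
    rw [mem_tpow_succ]
    refine U.toFilter.sets_of_superset hs ?_
    intro a ha
    have h' : s ∩ {x | f x ≠ f a} ∈ U := inter_mem hs (hf (f a))
    refine (tpow U m).toFilter.sets_of_superset (ih h') ?_
    rintro l ⟨hlen, hmem, hnd⟩
    refine ⟨by simp [hlen], ?_, ?_⟩
    · intro b hb
      rcases List.mem_cons.1 hb with rfl | hb
      · exact ha
      · exact (hmem b hb).1
    · simp only [List.map_cons, List.nodup_cons]
      refine ⟨?_, hnd⟩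
      intro hmemmap
      rcases List.mem_map.1 hmemmap with ⟨b, hb, hfb⟩
      exact (hmem b hb).2 hfb

theorem mem_tpow_add {U : Ultrafilter α} {j i : ℕ} {s : Set (List α)} :
    s ∈ tpow U (j + i) ↔ {r | {t | r ++ t ∈ s} ∈ tpow U i} ∈ tpow U j := by
  induction j generalizing s with
  | zero => simp [mem_tpow_zero]
  | succ m ih =>
    rw [Nat.succ_add, mem_tpow_succ, mem_tpow_succ]
    apply Iff.of_eq; congr 1; ext a
    simp only [Set.mem_setOf_eq]
    rw [ih]
    exact Iff.rfl

theorem length_mem_tpow {U : Ultrafilter α} {m : ℕ} :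
    {l : List α | l.length = m} ∈ tpow U m := by
  induction m with
  | zero => simp [mem_tpow_zero]
  | succ m ih =>
    rw [mem_tpow_succ]
    refine univ_mem' fun a => ?_
    refine (tpow U m).toFilter.sets_of_superset ih ?_
    intro l hl
    simp_all

-- an injective map from lists of naturals to positive-integer primes
theorem exists_e : ∃ e : List ℕ → ℕ+, Function.Injective e ∧ ∀ l, e l ∈ primes := by
  have hinf : {p : ℕ | p.Prime}.Infinite := Nat.infinite_setOf_prime
  let g : ℕ ↪ {p : ℕ | p.Prime} := hinf.natEmbedding
  refine ⟨fun l => ⟨(g (Encodable.encode l) : ℕ), (g (Encodable.encode l)).2.pos⟩, ?_, ?_⟩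
  · intro l l' h
    apply Encodable.encode_injective
    apply g.injective
    have := congrArg (fun x : ℕ+ => (x : ℕ)) h
    exact Subtype.ext this
  · intro l
    exact (g (Encodable.encode l)).2

noncomputable def e : List ℕ → ℕ+ := exists_e.choose

theorem e_inj : Function.Injective e := exists_e.choose_spec.1

theorem e_prime (l : List ℕ) : ((e l : ℕ+) : ℕ).Prime := exists_e.choose_spec.2 l

noncomputable def Q : Ultrafilter ℕ := hyperfilter ℕ

theorem cofinite_mem_Q {s : Set ℕ} (hs : sᶜ.Finite) : s ∈ Q :=
  Filter.mem_hyperfilter_of_finite_compl hs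

/-- The ultrafilter `P`. -/
noncomputable def P : Ultrafilter ℕ+ := (hyperfilter ℕ).bind fun m => (tpow Q m).map e

theorem mem_P {A : Set ℕ+} : A ∈ P ↔ {m | e ⁻¹' A ∈ tpow Q m} ∈ hyperfilter ℕ := by
  rw [P, mem_ubind]
  rfl

theorem primes_mem_P : primes ∈ P := by
  rw [mem_P]
  refine univ_mem' fun m => ?_
  have : e ⁻¹' primes = univ := eq_univ_of_forall fun l => exists_e.choose_spec.2 l
  rw [this]
  exact univ_mem

theorem P_ne_pure (x : ℕ+) : P ≠ pure x := by
  intro h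
  have h1 : {x}ᶜ ∈ P := by
    rw [mem_P]
    have hfin : {m : ℕ | ∃ l, e l = x ∧ l.length = m}.Finite := by
      apply Set.Subsingleton.finite
      rintro m ⟨l, hl, rfl⟩ m' ⟨l', hl', rfl⟩
      rw [e_inj (hl.trans hl'.symm)]
    refine mem_of_superset (Filter.mem_hyperfilter_of_finite_compl
      (s := {m : ℕ | ∃ l, e l = x ∧ l.length = m}ᶜ) (by rw [compl_compl]; exact hfin)) ?_
    intro m hm
    refine (tpow Q m).toFilter.sets_of_superset length_mem_tpow ?_
    intro l hl hx
    exact hm ⟨l, hx, hl⟩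
  rw [h] at h1
  simp at h1


theorem headI_ne_mem {k : ℕ} (b : ℕ) : {t : List ℕ | t.headI ≠ b} ∈ tpow Q (k + 1) := by
  rw [mem_tpow_succ]
  refine mem_of_superset (cofinite_mem_Q (s := {a : ℕ | a ≠ b}) (by simp)) ?_
  intro a ha
  have : {l : List ℕ | (a :: l).headI ≠ b} = univ := eq_univ_of_forall fun l => ha
  simp only [Set.mem_setOf_eq, this]
  exact univ_mem

/-- The building-block ultrafilters: products of `n` primes indexed by lists sharing a
`tpow Q j`-generic prefix `r`, with suffixes of length `k+1`. -/
noncomputable def V (n k j : ℕ) : Ultrafilter ℕ+ :=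
  (tpow Q j).bind fun r =>
    (tpow (tpow Q (k + 1)) n).map fun us => (us.map fun t => e (r ++ t)).prod

theorem mem_V {s : Set ℕ+} {n k j : ℕ} :
    s ∈ V n k j ↔
      {r | {us | (us.map fun t => e (r ++ t)).prod ∈ s} ∈ tpow (tpow Q (k + 1)) n}
        ∈ tpow Q j := by
  rw [V, mem_ubind]
  rfl

theorem einj_r (r : List ℕ) : Function.Injective fun t => e (r ++ t) :=
  e_inj.comp (List.append_right_injective r)

theorem distinctProd_mem_V {A : Set ℕ+} {n k j : ℕ} (hA : e ⁻¹' A ∈ tpow Q (j + (k + 1))) :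
    distinctProd A n ∈ V n k j := by
  rw [mem_V]
  refine mem_of_superset (mem_tpow_add.1 hA) ?_
  intro r hr
  refine mem_of_superset (cube_mem_tpow List.headI headI_ne_mem hr n) ?_
  rintro us ⟨hlen, hmem, hnd⟩
  refine ⟨us.map fun t => e (r ++ t), by simp [hlen], ?_, ?_, rfl⟩
  · exact (hnd.of_map List.headI).map (einj_r r)
  · intro p hp
    rcases List.mem_map.1 hp with ⟨t, ht, rfl⟩
    exact hmem t ht

/-- The pairwise disjoint "witness" sets. -/
noncomputable def D (n k : ℕ) : Set ℕ+ :=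
  {x | ∃ (r : List ℕ) (us : List (List ℕ)), us.length = n ∧ (∀ t ∈ us, List.length t = k + 1) ∧
    (us.map List.headI).Nodup ∧ (us.map fun t => e (r ++ t)).prod = x}

theorem D_mem_V {n k j : ℕ} : D n k ∈ V n k j := by
  rw [mem_V]
  refine univ_mem' fun r => ?_
  refine mem_of_superset
    (cube_mem_tpow List.headI headI_ne_mem (length_mem_tpow (m := k + 1)) n) ?_
  rintro us ⟨hlen, hmem, hnd⟩
  exact ⟨r, us, hlen, hmem, hnd, rfl⟩

/-- The countable family of ultrafilters in `S_n`. -/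
noncomputable def u (n k : ℕ) : Ultrafilter ℕ+ :=
  (hyperfilter ℕ).bind fun m => V n k (m - (k + 1))

theorem D_mem_u {n k : ℕ} : D n k ∈ u n k := by
  rw [u, mem_ubind]
  exact univ_mem' fun m => D_mem_V

theorem distinctProd_mem_u {A : Set ℕ+} (hA : A ∈ P) (n k : ℕ) :
    distinctProd A n ∈ u n k := by
  rw [u, mem_ubind]
  have h1 : {m : ℕ | k + 1 ≤ m} ∈ hyperfilter ℕ := by
    apply Filter.mem_hyperfilter_of_finite_compl
    exact (Set.finite_lt_nat (k + 1)).subset (fun m hm => by simpa using hm)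
  refine mem_of_superset (inter_mem (mem_P.1 hA) h1) ?_
  rintro m ⟨hm1, hm2⟩
  refine distinctProd_mem_V ?_
  rwa [Nat.sub_add_cancel hm2]

theorem take_head_aux {r r' a b c d : List ℕ} (h1 : r ++ a = r' ++ c) (h2 : r ++ b = r' ++ d)
    (ha : a ≠ []) (hb : b ≠ []) (hh : a.headI ≠ b.headI) (hlt : r.length < r'.length) :
    False := by
  have e1 : (r ++ a).take r'.length = r' := by rw [h1]; exact List.take_left (l₁ := r') (l₂ := c)
  have e2 : (r ++ b).take r'.length = r' := by rw [h2]; exact List.take_left (l₁ := r') (l₂ := d)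
  have e3 : (r ++ a).take r'.length = (r ++ b).take r'.length := by rw [e1, e2]
  rw [List.take_append, List.take_append,
    List.take_of_length_le (le_of_lt hlt)] at e3
  have e4 : a.take (r'.length - r.length) = b.take (r'.length - r.length) :=
    List.append_cancel_left e3
  obtain ⟨s, hs⟩ : ∃ s, r'.length - r.length = s + 1 := ⟨r'.length - r.length - 1, by omega⟩
  rcases List.exists_cons_of_ne_nil ha with ⟨x, a', rfl⟩
  rcases List.exists_cons_of_ne_nil hb with ⟨y, b', rfl⟩
  rw [hs] at e4
  simp only [List.take_succ_cons, List.cons.injEq] at e4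
  exact hh (by simpa using e4.1)

theorem heads_ne {us : List (List ℕ)} (hnd : (us.map List.headI).Nodup) {a b : List ℕ}
    (hain : a ∈ us) (hbin : b ∈ us) (hne : a ≠ b) : a.headI ≠ b.headI := by
  intro h
  exact hne ((List.nodup_map_iff_inj_on (hnd.of_map List.headI)).1 hnd a hain b hbin h)

theorem prime_list_mem {r : List ℕ} {us : List (List ℕ)} {r' : List ℕ}
    {us' : List (List ℕ)}
    (hprod : ((us.map fun t => e (r ++ t)).map fun p : ℕ+ => (p : ℕ)).prod
      = ((us'.map fun t => e (r' ++ t)).map fun p : ℕ+ => (p : ℕ)).prod)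
    {t : List ℕ} (ht : t ∈ us) : ∃ t' ∈ us', r ++ t = r' ++ t' := by
  have hperm : ((us.map fun t => e (r ++ t)).map fun p : ℕ+ => (p : ℕ)).Perm
      ((us'.map fun t => e (r' ++ t)).map fun p : ℕ+ => (p : ℕ)) := by
    have h1 := Nat.primeFactorsList_unique (l :=
      (us.map fun t => e (r ++ t)).map fun p : ℕ+ => (p : ℕ)) rfl ?_
    · have h2 := Nat.primeFactorsList_unique (l :=
        (us'.map fun t => e (r' ++ t)).map fun p : ℕ+ => (p : ℕ)) hprod.symm ?_
      · exact h1.trans h2.symm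
      · rintro p hp
        simp only [List.mem_map] at hp
        rcases hp with ⟨q, ⟨t', _, rfl⟩, rfl⟩
        exact e_prime _
    · rintro p hp
      simp only [List.mem_map] at hp
      rcases hp with ⟨q, ⟨t', _, rfl⟩, rfl⟩
      exact e_prime _
  have hmem : ((e (r ++ t) : ℕ+) : ℕ) ∈
      (us'.map fun t => e (r' ++ t)).map fun p : ℕ+ => (p : ℕ) := by
    refine hperm.subset ?_
    simp only [List.mem_map]
    exact ⟨e (r ++ t), ⟨t, ht, rfl⟩, rfl⟩
  simp only [List.mem_map] at hmem
  rcases hmem with ⟨q, ⟨t', ht', rfl⟩, hq⟩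
  exact ⟨t', ht', (e_inj (PNat.coe_injective hq)).symm⟩

theorem coe_map_prod (L : List ℕ+) :
    ((L.map fun p : ℕ+ => (p : ℕ)).prod) = ((L.prod : ℕ+) : ℕ) := by
  induction L with
  | nil => simp
  | cons p L ih => simp [List.prod_cons, ih]

theorem D_disjoint {n k k' : ℕ} (hn : 2 ≤ n) (hkk' : k ≠ k') :
    D n k ∩ D n k' = ∅ := by
  by_contra h
  rcases Set.nonempty_iff_ne_empty.2 h with ⟨x, hx1, hx2⟩
  obtain ⟨r, us, hlen, hl, hnd, hprod⟩ := hx1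
  obtain ⟨r', us', hlen', hl', hnd', hprod'⟩ := hx2
  -- get two distinct elements of `us`
  obtain ⟨a, b, rest, rfl⟩ : ∃ a b rest, us = a :: b :: rest := by
    rcases us with _ | ⟨a, _ | ⟨b, rest⟩⟩
    · simp at hlen; omega
    · simp at hlen; omega
    · exact ⟨_, _, _, rfl⟩
  have hha : a.headI ≠ b.headI := by
    have h2 := hnd
    simp only [List.map_cons, List.nodup_cons, List.mem_cons] at h2
    tauto
  have hane : a ≠ b := fun hab => hha (by rw [hab])
  have hanil : a ≠ [] := by
    have := hl a (by simp); intro hnil; rw [hnil] at this; simp at this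
  have hbnil : b ≠ [] := by
    have := hl b (by simp); intro hnil; rw [hnil] at this; simp at this
  have hprodN : (((a :: b :: rest).map fun t => e (r ++ t)).map fun p : ℕ+ => (p : ℕ)).prod
      = ((us'.map fun t => e (r' ++ t)).map fun p : ℕ+ => (p : ℕ)).prod := by
    rw [coe_map_prod, coe_map_prod, hprod, hprod']
  obtain ⟨c, hc, hac⟩ := prime_list_mem hprodN (t := a) (by simp)
  obtain ⟨d, hd, hbd⟩ := prime_list_mem hprodN (t := b) (by simp)
  have hcne : c ≠ d := by
    intro hcd
    exact hane (List.append_cancel_left (hac.trans (by rw [hcd, ← hbd])))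
  have hcnil : c ≠ [] := by
    have := hl' c hc; intro hnil; rw [hnil] at this; simp at this
  have hdnil : d ≠ [] := by
    have := hl' d hd; intro hnil; rw [hnil] at this; simp at this
  rcases lt_trichotomy r.length r'.length with hlt | heq | hgt
  · exact take_head_aux hac hbd hanil hbnil hha hlt
  · -- equal prefix lengths: a = c, so k = k'
    have : a = c := (List.append_inj hac heq).2
    have h1 : a.length = k + 1 := hl a (by simp)
    have h2 : c.length = k' + 1 := hl' c hc
    rw [this, h2] at h1
    omega
  · exact take_head_aux hac.symm hbd.symm hcnil hdnil
      (heads_ne hnd' hc hd hcne) hgt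

/-! ### Counting: an independent family gives `2 ^ continuum` ultrafilters -/

section count
open Classical in
/-- Base type for the independent family. -/
abbrev B : Type := Finset ℕ × Finset (Finset ℕ)

open Classical in
noncomputable def X (S : Set ℕ) : Set B := {b | b.1.filter (· ∈ S) ∈ b.2}

open Classical in
theorem mem_X_single (S : Set ℕ) (x : ℕ) :
    (({x}, {{x}}) : B) ∈ X S ↔ x ∈ S := by
  simp only [X, Set.mem_setOf_eq, Finset.filter_singleton]
  by_cases hx : x ∈ S <;> simp [hx, Finset.singleton_ne_empty]

theorem X_inj : Function.Injective X := by
  intro S S' h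
  ext x
  rw [← mem_X_single S x, ← mem_X_single S' x, h]

open Classical in
/-- Choice of a separating point for two distinct sets. -/
noncomputable def sep (S S' : Set ℕ) : ℕ :=
  if h : ∃ x, ¬(x ∈ S ↔ x ∈ S') then h.choose else 0

theorem sep_spec {S S' : Set ℕ} (h : S ≠ S') : ¬(sep S S' ∈ S ↔ sep S S' ∈ S') := by
  have hx : ∃ x, ¬(x ∈ S ↔ x ∈ S') := by
    by_contra hc
    push_neg at hc
    exact h (Set.ext fun x => hc x)
  rw [sep, dif_pos hx]
  exact hx.choose_spec

/-- The family of generators. -/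
def Cgen (𝒮 : Set (Set ℕ)) : Set (Set B) :=
  {Y | ∃ S, (S ∈ 𝒮 ∧ Y = X S) ∨ (S ∉ 𝒮 ∧ Y = (X S)ᶜ)}

open Classical in
theorem sInter_nonempty (𝒮 : Set (Set ℕ)) {t : Set (Set B)} (hts : t ⊆ Cgen 𝒮)
    (htf : t.Finite) : (⋂₀ t).Nonempty := by
  set 𝒮₁ : Set (Set ℕ) := {S | S ∈ 𝒮 ∧ X S ∈ t} with h𝒮₁
  set 𝒮₀ : Set (Set ℕ) := {S | S ∉ 𝒮 ∧ (X S)ᶜ ∈ t} with h𝒮₀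
  have h1fin : 𝒮₁.Finite := by
    have : 𝒮₁ ⊆ X ⁻¹' t := fun S hS => hS.2
    exact ((htf.preimage (X_inj.injOn)).subset this)
  have h0fin : 𝒮₀.Finite := by
    have : 𝒮₀ ⊆ (fun S => (X S)ᶜ) ⁻¹' t := fun S hS => hS.2
    refine ((htf.preimage ?_).subset this)
    exact (compl_injective.comp X_inj).injOn
  set F : Finset ℕ :=
    h1fin.toFinset.biUnion (fun S => h0fin.toFinset.image (fun S' => sep S S')) with hF
  set G : Finset (Finset ℕ) := h1fin.toFinset.image (fun S => F.filter (· ∈ S)) with hG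
  refine ⟨(F, G), ?_⟩
  intro Y hY
  rcases hts hY with ⟨S, ⟨hS, rfl⟩ | ⟨hS, rfl⟩⟩
  · -- positive generator
    have hS1 : S ∈ 𝒮₁ := ⟨hS, hY⟩
    exact Finset.mem_image.2 ⟨S, h1fin.mem_toFinset.2 hS1, rfl⟩
  · -- negative generator
    have hS0 : S ∈ 𝒮₀ := ⟨hS, hY⟩
    intro hmem
    rcases Finset.mem_image.1 hmem with ⟨S'', hS''mem, hfil⟩
    have hS''1 : S'' ∈ 𝒮₁ := h1fin.mem_toFinset.1 hS''mem
    have hne : S'' ≠ S := fun hh => hS (hh ▸ hS''1.1)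
    have hxF : sep S'' S ∈ F := by
      refine Finset.mem_biUnion.2 ⟨S'', hS''mem, ?_⟩
      exact Finset.mem_image.2 ⟨S, h0fin.mem_toFinset.2 hS0, rfl⟩
    have := sep_spec hne
    have hiff : (sep S'' S ∈ S'') ↔ (sep S'' S ∈ S) := by
      constructor
      · intro hin
        have h1 : sep S'' S ∈ F.filter (· ∈ S'') := Finset.mem_filter.2 ⟨hxF, hin⟩
        rw [hfil] at h1
        exact (Finset.mem_filter.1 h1).2
      · intro hin
        have h1 : sep S'' S ∈ F.filter (· ∈ S) := Finset.mem_filter.2 ⟨hxF, hin⟩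
        rw [← hfil] at h1
        exact (Finset.mem_filter.1 h1).2
    exact this hiff

theorem generate_neBot (𝒮 : Set (Set ℕ)) : (Filter.generate (Cgen 𝒮)).NeBot :=
  Filter.generate_neBot_iff.2 fun _ hts htf => sInter_nonempty 𝒮 hts htf

/-- For every family of subsets of ℕ, an ultrafilter on `B`. -/
noncomputable def UF (𝒮 : Set (Set ℕ)) : Ultrafilter B :=
  haveI := generate_neBot 𝒮
  Ultrafilter.of (Filter.generate (Cgen 𝒮))

theorem mem_UF {𝒮 : Set (Set ℕ)} {Y : Set B} (hY : Y ∈ Cgen 𝒮) : Y ∈ UF 𝒮 := by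
  haveI := generate_neBot 𝒮
  exact Ultrafilter.of_le (Filter.generate (Cgen 𝒮)) (Filter.mem_generate_of_mem hY)

theorem UF_inj : Function.Injective UF := by
  intro 𝒮 𝒮' h
  by_contra hne
  obtain ⟨S, hS⟩ : ∃ S, ¬(S ∈ 𝒮 ↔ S ∈ 𝒮') := by
    by_contra hc
    push_neg at hc
    exact hne (Set.ext fun S => hc S)
  have key : ∀ 𝒯 𝒯' : Set (Set ℕ), UF 𝒯 = UF 𝒯' → S ∈ 𝒯 → S ∉ 𝒯' → False := by
    intro 𝒯 𝒯' hEq hin hout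
    have h1 : X S ∈ UF 𝒯 := mem_UF ⟨S, Or.inl ⟨hin, rfl⟩⟩
    have h2 : (X S)ᶜ ∈ UF 𝒯' := mem_UF ⟨S, Or.inr ⟨hout, rfl⟩⟩
    rw [hEq] at h1
    have := inter_mem h1 h2
    rw [Set.inter_compl_self] at this
    exact (UF 𝒯').toFilter.empty_notMem this
  by_cases hin : S ∈ 𝒮
  · exact key 𝒮 𝒮' h hin (fun hin' => hS ⟨fun _ => hin', fun _ => hin⟩)
  · have hin' : S ∈ 𝒮' := by tauto
    exact key 𝒮' 𝒮 h.symm hin' hin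

end count

/-! ### The map into the set of ultrafilters realising the pattern -/

noncomputable def Phi (n : ℕ) (Wb : Ultrafilter B) : Ultrafilter ℕ+ :=
  Wb.bind fun b => u n (Encodable.encode b)

theorem Phi_mem_S {n : ℕ} (Wb : Ultrafilter B) {A : Set ℕ+} (hA : A ∈ P) :
    distinctProd A n ∈ Phi n Wb := by
  rw [Phi, mem_ubind]
  exact univ_mem' fun b => distinctProd_mem_u hA n _

theorem Phi_inj {n : ℕ} (hn : 2 ≤ n) : Function.Injective (Phi n) := by
  intro W1 W2 h
  by_contra hne
  obtain ⟨s, hs1, hs2⟩ : ∃ s, s ∈ W1 ∧ s ∉ W2 := by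
    by_contra hc
    push_neg at hc
    refine hne (Ultrafilter.coe_injective (Filter.ext fun s => ⟨hc s, fun hs => ?_⟩))
    by_contra hs1
    have hc1 : sᶜ ∈ W1 := Ultrafilter.compl_mem_iff_notMem.2 hs1
    have hc2 : sᶜ ∈ W2 := hc sᶜ hc1
    have := inter_mem hs hc2
    rw [Set.inter_compl_self] at this
    exact W2.toFilter.empty_notMem this
  set Xs : Set ℕ+ := ⋃ b ∈ s, D n (Encodable.encode b) with hXs
  have h1 : Xs ∈ Phi n W1 := by
    rw [Phi, mem_ubind]
    refine mem_of_superset hs1 fun b hb => ?_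
    show Xs ∈ u n (Encodable.encode b)
    have hsub : D n (Encodable.encode b) ⊆ Xs :=
      Set.subset_biUnion_of_mem (u := fun b => D n (Encodable.encode b)) hb
    exact mem_of_superset D_mem_u hsub
  have h2 : Xsᶜ ∈ Phi n W2 := by
    rw [Phi, mem_ubind]
    refine mem_of_superset (Ultrafilter.compl_mem_iff_notMem.2 hs2) fun b hb => ?_
    show Xsᶜ ∈ u n (Encodable.encode b)
    refine mem_of_superset (D_mem_u (n := n) (k := Encodable.encode b)) ?_
    intro y hy hyX
    rcases Set.mem_iUnion₂.1 hyX with ⟨b', hb', hy'⟩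
    have hbne : Encodable.encode b ≠ Encodable.encode b' := by
      intro hh
      exact hb (Encodable.encode_injective hh ▸ hb')
    have := D_disjoint (n := n) hn hbne
    exact absurd (Set.mem_inter hy hy') (by rw [this]; exact id)
  rw [h] at h1
  have := inter_mem h1 h2
  rw [Set.inter_compl_self] at this
  exact (Phi n W2).toFilter.empty_notMem this

end S12



open Cardinal

set_option linter.unusedVariables false in
theorem stmt12 (hCH : Cardinal.continuum = Cardinal.aleph 1) :
    ∃ P : Ultrafilter ℕ+, (∀ m : ℕ+, P ≠ pure m) ∧ primes ∈ P ∧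
      ∀ n : ℕ, 2 ≤ n →
        Cardinal.mk ↥{F : Ultrafilter ℕ+ | ∀ A ∈ P, A ⊆ primes → distinctProd A n ∈ F}
          = 2 ^ Cardinal.continuum := by
  refine ⟨S12.P, fun m h => S12.P_ne_pure m h, S12.primes_mem_P, ?_⟩
  intro n hn
  apply le_antisymm
  · -- upper bound: there are at most 2^continuum ultrafilters on ℕ+
    have h1 : #↥{F : Ultrafilter ℕ+ | ∀ A ∈ S12.P, A ⊆ primes → distinctProd A n ∈ F}
        ≤ #(Ultrafilter ℕ+) := mk_subtype_le _
    have h2 : #(Ultrafilter ℕ+) ≤ #(Set (Set ℕ+)) := by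
      refine mk_le_of_injective (f := fun F : Ultrafilter ℕ+ => {s | s ∈ F}) ?_
      intro F G h
      exact Ultrafilter.coe_injective (Filter.ext fun s => Set.ext_iff.1 h s)
    have h3 : #(Set (Set ℕ+)) = 2 ^ Cardinal.continuum := by
      rw [mk_set, mk_set, mk_eq_aleph0 ℕ+, two_power_aleph0]
    exact (h1.trans h2).trans_eq h3
  · -- lower bound via the injection `𝒮 ↦ Phi n (UF 𝒮)`
    have hinj : Function.Injective (fun 𝒮 : Set (Set ℕ) =>
        (⟨S12.Phi n (S12.UF 𝒮), fun A hA _ => S12.Phi_mem_S _ hA⟩ :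
          ↥{F : Ultrafilter ℕ+ | ∀ A ∈ S12.P, A ⊆ primes → distinctProd A n ∈ F})) := by
      intro x y h
      exact S12.UF_inj (S12.Phi_inj hn (congrArg Subtype.val h))
    have h4 := mk_le_of_injective hinj
    have h5 : #(Set (Set ℕ)) = 2 ^ Cardinal.continuum := by
      rw [mk_set, mk_set, mk_nat, two_power_aleph0]
    exact h5 ▸ h4
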